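/- Let u : ℝ² → ℝ² be three times continuously differentiable with compact support and with div u = 0 everywhere. Then ∫_{ℝ²} [ (u·∇)Δu ](x) · u(x) dx + ∫_{ℝ²} Δu(x) · [ (u·∇)u ](x) dx = 0. -/

import Mathlib

open MeasureTheory

/-- Partial derivative in direction `i` of a scalar function on `ℝ²`. -/
noncomputable def pd (i : Fin 2) (f : (Fin 2 → ℝ) → ℝ) (x : Fin 2 → ℝ) : ℝ :=
  fderiv ℝ f x (Pi.single i 1)

/-- Laplacian of a scalar function on `ℝ²`. -/
noncomputable def lap (f : (Fin 2 → ℝ) → ℝ) (x : Fin 2 → ℝ) : ℝ :=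
  pd 0 (pd 0 f) x + pd 1 (pd 1 f) x

lemma contDiff_pd {n m : WithTop ℕ∞} (i : Fin 2) {f : (Fin 2 → ℝ) → ℝ}
    (hf : ContDiff ℝ n f) (hmn : m + 1 ≤ n) : ContDiff ℝ m (pd i f) :=
  (hf.fderiv_right hmn).clm_apply contDiff_const

lemma hcs_pd (i : Fin 2) {f : (Fin 2 → ℝ) → ℝ} (hc : HasCompactSupport f) :
    HasCompactSupport (pd i f) :=
  (hc.fderiv ℝ).comp_left (g := fun L : (Fin 2 → ℝ) →L[ℝ] ℝ => L (Pi.single i 1)) rfl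

lemma pd_mul {a b : (Fin 2 → ℝ) → ℝ} {x} (ha : DifferentiableAt ℝ a x)
    (hb : DifferentiableAt ℝ b x) (j : Fin 2) :
    pd j (fun y => a y * b y) x = pd j a x * b x + a x * pd j b x := by
  simp only [pd]
  rw [fderiv_fun_mul ha hb]
  simp only [ContinuousLinearMap.add_apply, ContinuousLinearMap.smul_apply, smul_eq_mul]
  ring

lemma integral_pd_eq_zero (f : (Fin 2 → ℝ) → ℝ) (hf : ContDiff ℝ 1 f)
    (hc : HasCompactSupport f) (i : Fin 2) : ∫ x, pd i f x = 0 := by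
  obtain ⟨C, hC⟩ := ContDiff.lipschitzWith_of_hasCompactSupport hc hf one_ne_zero
  have h1 : LipschitzWith 0 (fun _ : Fin 2 → ℝ => (1 : ℝ)) := LipschitzWith.const 1
  have key := LipschitzWith.integral_lineDeriv_mul_eq (μ := volume) h1 hC hc (Pi.single i 1)
  have l0 : ∀ x : Fin 2 → ℝ, lineDeriv ℝ (fun _ : Fin 2 → ℝ => (1:ℝ)) x (Pi.single i 1) = 0 := by
    intro x; simp [lineDeriv]
  have l1 : ∀ x : Fin 2 → ℝ, lineDeriv ℝ f x (-(Pi.single i 1)) * 1 = -(pd i f x) := by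
    intro x
    rw [((hf.differentiable one_ne_zero) x).lineDeriv_eq_fderiv]
    simp [pd]
  simp only [l0, zero_mul, integral_zero, l1, integral_neg] at key
  linarith [key]

lemma continuous_pd (i : Fin 2) {f : (Fin 2 → ℝ) → ℝ} (hf : ContDiff ℝ 1 f) :
    Continuous (pd i f) :=
  (contDiff_pd (m := 0) i hf (by norm_num)).continuous

lemma integral_udot_eq_zero (u : (Fin 2 → ℝ) → (Fin 2 → ℝ))
    (hu : ContDiff ℝ 1 u) (hc : HasCompactSupport u)
    (hdiv : ∀ x, pd 0 (fun y => u y 0) x + pd 1 (fun y => u y 1) x = 0)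
    (F : (Fin 2 → ℝ) → ℝ) (hF : ContDiff ℝ 1 F) (hcF : HasCompactSupport F) :
    ∫ x, ∑ k, u x k * pd k F x = 0 := by
  have hk : ∀ k, ContDiff ℝ 1 (fun x => u x k) := fun k => (contDiff_pi.mp hu) k
  have hck : ∀ k : Fin 2, HasCompactSupport (fun x => u x k) := fun k =>
    hc.comp_left (g := fun v : Fin 2 → ℝ => v k) rfl
  have hG : ∀ k : Fin 2, ContDiff ℝ 1 (fun x => u x k * F x) := fun k => (hk k).mul hF
  have hcG : ∀ k : Fin 2, HasCompactSupport (fun x => u x k * F x) := fun k =>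
    (hck k).mul_right
  have key : ∀ x, (∑ k, u x k * pd k F x)
      = pd 0 (fun y => u y 0 * F y) x + pd 1 (fun y => u y 1 * F y) x := by
    intro x
    rw [pd_mul (((hk 0).differentiable one_ne_zero) x) ((hF.differentiable one_ne_zero) x),
        pd_mul (((hk 1).differentiable one_ne_zero) x) ((hF.differentiable one_ne_zero) x),
        Fin.sum_univ_two]
    linear_combination (-F x) * (hdiv x)
  rw [integral_congr_ae (Filter.Eventually.of_forall key)]
  rw [integral_add
    ((continuous_pd 0 (hG 0)).integrable_of_hasCompactSupport (hcs_pd 0 (hcG 0)))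
    ((continuous_pd 1 (hG 1)).integrable_of_hasCompactSupport (hcs_pd 1 (hcG 1))),
    integral_pd_eq_zero _ (hG 0) (hcG 0) 0, integral_pd_eq_zero _ (hG 1) (hcG 1) 1, add_zero]

/-- `∫ ((u·∇)Δu)·u + ∫ Δu·((u·∇)u) = 0` for a compactly supported,
divergence-free `C³` field `u`. -/
theorem highest_order_cancellation
    (u : (Fin 2 → ℝ) → (Fin 2 → ℝ))
    (hu : ContDiff ℝ 3 u) (hc : HasCompactSupport u)
    (hdiv : ∀ x, pd 0 (fun y => u y 0) x + pd 1 (fun y => u y 1) x = 0) :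
    (∫ x : Fin 2 → ℝ,
        ∑ i, (∑ k, u x k * pd k (fun y => lap (fun z => u z i) y) x) * u x i)
    + (∫ x : Fin 2 → ℝ,
        ∑ i, lap (fun z => u z i) x * (∑ k, u x k * pd k (fun y => u y i) x)) = 0 := by
  have hu1 : ContDiff ℝ 1 u := hu.of_le (by norm_num)
  have hki : ∀ i, ContDiff ℝ 3 (fun x => u x i) := fun i => (contDiff_pi.mp hu) i
  have hck : ∀ i : Fin 2, HasCompactSupport (fun x => u x i) := fun i =>
    hc.comp_left (g := fun v : Fin 2 → ℝ => v i) rfl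
  have hUc : ∀ k : Fin 2, Continuous (fun x => u x k) := fun k => (hki k).continuous
  have hL : ∀ i : Fin 2, ContDiff ℝ 1 (lap (fun z => u z i)) := fun i =>
    ((contDiff_pd (m := 1) 0 (contDiff_pd (m := 2) 0 (hki i) (by norm_num)) (by norm_num)).add
     (contDiff_pd (m := 1) 1 (contDiff_pd (m := 2) 1 (hki i) (by norm_num)) (by norm_num)))
  have hcL : ∀ i : Fin 2, HasCompactSupport (lap (fun z => u z i)) := fun i =>
    ((hcs_pd 0 (hcs_pd 0 (hck i))).add (hcs_pd 1 (hcs_pd 1 (hck i))))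
  have hLc : ∀ i : Fin 2, Continuous (lap (fun z => u z i)) := fun i => (hL i).continuous
  have hpdLc : ∀ i k : Fin 2, Continuous (pd k (lap (fun z => u z i))) := fun i k =>
    continuous_pd k (hL i)
  have hpduc : ∀ i k : Fin 2, Continuous (pd k (fun y => u y i)) := fun i k =>
    continuous_pd k ((hki i).of_le (by norm_num))
  -- F i
  have hF : ∀ i : Fin 2, ContDiff ℝ 1 (fun x => lap (fun z => u z i) x * u x i) := fun i =>
    (hL i).mul ((hki i).of_le (by norm_num))
  have hcF : ∀ i : Fin 2, HasCompactSupport (fun x => lap (fun z => u z i) x * u x i) :=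
    fun i => (hck i).mul_left
  have A : ∀ i : Fin 2,
      (∫ x, ∑ k, u x k * pd k (fun x => lap (fun z => u z i) x * u x i) x) = 0 := fun i =>
    integral_udot_eq_zero u hu1 hc hdiv _ (hF i) (hcF i)
  -- pointwise identity
  have key : ∀ x : Fin 2 → ℝ,
      (∑ i, (∑ k, u x k * pd k (fun y => lap (fun z => u z i) y) x) * u x i)
      + (∑ i, lap (fun z => u z i) x * (∑ k, u x k * pd k (fun y => u y i) x))
      = ∑ i : Fin 2, ∑ k, u x k * pd k (fun x => lap (fun z => u z i) x * u x i) x := by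
    intro x
    have pm : ∀ i k : Fin 2, pd k (fun y => lap (fun z => u z i) y * u y i) x
        = pd k (lap (fun z => u z i)) x * u x i
          + lap (fun z => u z i) x * pd k (fun y => u y i) x := fun i k =>
      pd_mul (((hL i).differentiable one_ne_zero) x)
        ((((hki i).of_le (show (1 : WithTop ℕ∞) ≤ 3 by norm_num)).differentiable one_ne_zero) x) k
    simp only [pm, Fin.sum_univ_two]
    ring
  -- integrability
  have hIA : Integrable (fun x => ∑ i, (∑ k, u x k * pd k (fun y => lap (fun z => u z i) y) x)
      * u x i) := by
    have e : (fun x => ∑ i, (∑ k, u x k * pd k (fun y => lap (fun z => u z i) y) x) * u x i)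
        = fun x => (u x 0 * pd 0 (lap (fun z => u z 0)) x
            + u x 1 * pd 1 (lap (fun z => u z 0)) x) * u x 0
          + (u x 0 * pd 0 (lap (fun z => u z 1)) x
            + u x 1 * pd 1 (lap (fun z => u z 1)) x) * u x 1 := by
      funext x; simp [Fin.sum_univ_two]
    rw [e]
    refine Continuous.integrable_of_hasCompactSupport (by fun_prop) ?_
    exact ((hck 0).mul_left).add ((hck 1).mul_left)
  have hIB : Integrable (fun x => ∑ i, lap (fun z => u z i) x
      * (∑ k, u x k * pd k (fun y => u y i) x)) := by
    have e : (fun x => ∑ i, lap (fun z => u z i) x * (∑ k, u x k * pd k (fun y => u y i) x))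
        = fun x => lap (fun z => u z 0) x
              * (u x 0 * pd 0 (fun y => u y 0) x + u x 1 * pd 1 (fun y => u y 0) x)
          + lap (fun z => u z 1) x
              * (u x 0 * pd 0 (fun y => u y 1) x + u x 1 * pd 1 (fun y => u y 1) x) := by
      funext x; simp [Fin.sum_univ_two]
    rw [e]
    refine Continuous.integrable_of_hasCompactSupport (by fun_prop) ?_
    exact ((hcL 0).mul_right).add ((hcL 1).mul_right)
  have hIg : ∀ i : Fin 2, Integrable
      (fun x => ∑ k, u x k * pd k (fun x => lap (fun z => u z i) x * u x i) x) := by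
    intro i
    have e : (fun x => ∑ k, u x k * pd k (fun x => lap (fun z => u z i) x * u x i) x)
        = fun x => u x 0 * pd 0 (fun x => lap (fun z => u z i) x * u x i) x
          + u x 1 * pd 1 (fun x => lap (fun z => u z i) x * u x i) x := by
      funext x; rw [Fin.sum_univ_two]
    rw [e]
    refine Continuous.integrable_of_hasCompactSupport ?_ ?_
    · exact ((hUc 0).mul (continuous_pd 0 (hF i))).add ((hUc 1).mul (continuous_pd 1 (hF i)))
    · exact ((hck 0).mul_right).add ((hck 1).mul_right)
  rw [← integral_add hIA hIB]
  rw [integral_congr_ae (Filter.Eventually.of_forall key)]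
  rw [integral_finset_sum _ (fun i _ => hIg i)]
  rw [Fin.sum_univ_two, A 0, A 1, add_zero]
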